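/- For every nonnegative integer n, sum_{j=0}^{2n+1} (-s)^j (2n+1 choose j)_q = sum_{k=0}^n (n choose k)_{q^2} prod_{j=0}^{2k}(q^j - s) * ((q;q^2)_{n+1} / (q;q^2)_{k+1}). -/
import Mathlib


open Finset

/-- Gaussian (q-)binomial coefficient, defined over any commutative ring by the
Pascal-type recurrence `[n+1, k+1] = [n, k] + q^(k+1) * [n, k+1]`. -/
def qbinom {R : Type*} [CommRing R] (q : R) : ℕ → ℕ → R
  | _, 0 => 1
  | 0, _ + 1 => 0
  | n + 1, k + 1 => qbinom q n k + q ^ (k + 1) * qbinom q n (k + 1)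

section Aux

variable {R : Type*} [CommRing R]

@[simp] lemma qbinom_zero (q : R) (n : ℕ) : qbinom q n 0 = 1 := by
  cases n <;> rfl

lemma qbinom_succ_succ (q : R) (n k : ℕ) :
    qbinom q (n+1) (k+1) = qbinom q n k + q ^ (k+1) * qbinom q n (k+1) := rfl

lemma qbinom_eq_zero_of_lt (q : R) : ∀ {n k : ℕ}, n < k → qbinom q n k = 0 := by
  intro n
  induction n with
  | zero => intro k hk; match k, hk with
      | k+1, _ => rfl
  | succ n ih =>
      intro k hk
      match k, hk with
      | k+1, hk =>
        rw [qbinom_succ_succ, ih (by omega), ih (by omega)]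
        ring

/-- second Pascal rule -/
lemma qbinom_pascal2 (q : R) : ∀ n k : ℕ, k ≤ n →
    qbinom q (n+1) (k+1) = q ^ (n-k) * qbinom q n k + qbinom q n (k+1) := by
  intro n
  induction n with
  | zero =>
      intro k hk
      interval_cases k
      simp [qbinom_succ_succ, qbinom_eq_zero_of_lt q (show (0:ℕ) < 1 by omega)]
  | succ n ih =>
      intro k hk
      match k with
      | 0 =>
          have d1 : qbinom q (n+2) 1 = qbinom q (n+1) 0 + q^1 * qbinom q (n+1) 1 :=
            qbinom_succ_succ q (n+1) 0
          have d2 : qbinom q (n+1) 1 = qbinom q n 0 + q^1 * qbinom q n 1 :=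
            qbinom_succ_succ q n 0
          have i := ih 0 (Nat.zero_le n)
          simp only [qbinom_zero, Nat.sub_zero] at d1 d2 i ⊢
          linear_combination d1 + q * i - d2
      | k+1 =>
          rcases eq_or_lt_of_le hk with h | h
          · -- k = n
            have hkn : k = n := by omega
            subst hkn
            rw [qbinom_succ_succ, qbinom_eq_zero_of_lt q (show k+1 < k+2 by omega)]
            simp
          · have hk1 : k + 1 ≤ n := by omega
            have dL := qbinom_succ_succ q (n+1) (k+1)
            have d1 := qbinom_succ_succ q n k
            have d2 := qbinom_succ_succ q n (k+1)
            have p1 := ih k (by omega)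
            have p2 := ih (k+1) hk1
            have eA : q^(k+1+1) * q^(n-(k+1)) = q^(k+1) * q^(n-k) := by
              rw [← pow_add, ← pow_add]; congr 1; omega
            have e2 : (q:R) ^ (n+1-(k+1)) = q ^ (n-k) := by congr 1; omega
            rw [e2]
            linear_combination dL - q^(n-k) * d1 + p1 - d2 + q^(k+1+1) * p2 + qbinom q n (k+1) * eA

/-- absorption identity -/
lemma qbinom_absorb (q : R) (n k : ℕ) (h : k ≤ n) :
    (1 - q ^ (k+1)) * qbinom q n (k+1) = (1 - q ^ (n-k)) * qbinom q n k := by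
  have h1 := qbinom_succ_succ q n k
  have h2 := qbinom_pascal2 q n k h
  linear_combination h1 - h2

/-- `∏_{j<m} (q^j - s)` -/
def Pprod (q s : R) (m : ℕ) : R := ∏ j ∈ Finset.range m, (q ^ j - s)

/-- `∏_{a ≤ i < b} (1 - q^(2i+1))` -/
def IcoP (q : R) (a b : ℕ) : R := ∏ i ∈ Finset.Ico a b, (1 - q ^ (2*i+1))

/-- telescoping certificate for step A -/
def gA (q s : R) : ℕ → R
  | 0 => 0
  | k+1 => -q^(2*k+1) * (1 - q^(2*k+2)) * Pprod q s (2*k+1)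

lemma gA_zero (q s : R) : gA q s 0 = 0 := rfl

lemma gA_succ (q s : R) (k : ℕ) :
    gA q s (k+1) = -q^(2*k+1) * (1 - q^(2*k+2)) * Pprod q s (2*k+1) := rfl

lemma Pprod_succ (q s : R) (m : ℕ) : Pprod q s (m+1) = Pprod q s m * (q^m - s) :=
  Finset.prod_range_succ _ _

lemma Pprod_shift (q s : R) : ∀ m : ℕ, Pprod q (q*s) (m+1) = (1 - q*s) * q^m * Pprod q s m := by
  intro m
  induction m with
  | zero => simp [Pprod]
  | succ m ih =>
      rw [Pprod_succ, ih, Pprod_succ]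
      ring

lemma IcoP_self (q : R) (a : ℕ) : IcoP q a a = 1 := by simp [IcoP]

lemma IcoP_bot (q : R) {a b : ℕ} (h : a < b) :
    IcoP q a b = (1 - q^(2*a+1)) * IcoP q (a+1) b :=
  Finset.prod_eq_prod_Ico_succ_bot h _

lemma IcoP_top (q : R) {a b : ℕ} (h : a ≤ b) :
    IcoP q a (b+1) = IcoP q a b * (1 - q^(2*b+1)) :=
  Finset.prod_Ico_succ_top h _

lemma coreA (q s : R) (k : ℕ) :
    Pprod q (q*s) (2*k) - s * Pprod q s (2*k) + gA q s k = Pprod q s (2*k+1) := by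
  match k with
  | 0 => simp [Pprod, gA, Finset.prod_range_one]
  | k+1 =>
      have e1 : 2*(k+1) = (2*k+1)+1 := by omega
      have e2 : 2*(k+1)+1 = ((2*k+1)+1)+1 := by omega
      rw [gA_succ, e1, Pprod_shift]
      simp only [Pprod_succ]
      ring

lemma coreB (q s : R) (k : ℕ) :
    Pprod q (q*s) (2*k+1) - s * Pprod q s (2*k+1)
      = Pprod q s (2*k+2) + q^(2*k) * (1 - q^(2*k+1)) * Pprod q s (2*k) := by
  have e1 : 2*k+2 = (2*k+1)+1 := by omega
  rw [Pprod_shift, e1]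
  simp only [Pprod_succ]
  ring

/-- the even-index companion sum -/
def MRP (q s : R) (n : ℕ) : R :=
  ∑ k ∈ Finset.range (n+1), qbinom (q^2) n k * Pprod q s (2*k) * IcoP q k n

/-- the odd-index sum (the right side of the target identity) -/
def GRP (q s : R) (n : ℕ) : R :=
  ∑ k ∈ Finset.range (n+1), qbinom (q^2) n k * Pprod q s (2*k+1) * IcoP q (k+1) (n+1)

/-- the alternating binomial sum -/
def Lq (q s : R) (N : ℕ) : R := ∑ j ∈ Finset.range (N+1), (-s)^j * qbinom q N j

lemma Lq_succ (q s : R) (N : ℕ) : Lq q s (N+1) = Lq q (q*s) N - s * Lq q s N := by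
  have key : ∑ j ∈ Finset.range (N+1), (-(q*s))^(j+1) * qbinom q N (j+1)
      = Lq q (q*s) N - 1 := by
    have h1 := Finset.sum_range_succ' (fun j => (-(q*s))^j * qbinom q N j) (N+1)
    have h2 := Finset.sum_range_succ (fun j => (-(q*s))^j * qbinom q N j) (N+1)
    rw [qbinom_eq_zero_of_lt q (show N < N+1 by omega)] at h2
    simp only [pow_zero, qbinom_zero, mul_zero, mul_one] at h1 h2
    rw [Lq]
    linear_combination h2 - h1
  calc Lq q s (N+1)
      = ∑ j ∈ Finset.range (N+1), (-s)^(j+1) * qbinom q (N+1) (j+1) + 1 := by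
        rw [Lq, Finset.sum_range_succ' (fun j => (-s)^j * qbinom q (N+1) j) (N+1)]
        simp
    _ = ∑ j ∈ Finset.range (N+1),
          ((-(q*s))^(j+1) * qbinom q N (j+1) + (-s)*((-s)^j * qbinom q N j)) + 1 := by
        congr 1
        apply Finset.sum_congr rfl
        intro j _
        rw [qbinom_succ_succ, show -(q*s) = q * (-s) by ring, mul_pow]
        ring
    _ = (Lq q (q*s) N - 1) + (-s) * Lq q s N + 1 := by
        rw [Finset.sum_add_distrib, key, ← Finset.mul_sum]
        simp only [Lq]
    _ = Lq q (q*s) N - s * Lq q s N := by ring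

lemma perA (q s : R) (n k : ℕ) (hk : k ≤ n) :
    qbinom (q^2) n k * Pprod q (q*s) (2*k) * IcoP q k n
      - s * (qbinom (q^2) n k * Pprod q s (2*k) * IcoP q k n)
      - qbinom (q^2) n k * Pprod q s (2*k+1) * IcoP q (k+1) (n+1)
    = qbinom (q^2) n (k+1) * IcoP q (k+1) n * gA q s (k+1)
      - qbinom (q^2) n k * IcoP q k n * gA q s k := by
  rcases eq_or_lt_of_le hk with rfl | h
  · rw [qbinom_eq_zero_of_lt (q^2) (show k < k+1 by omega), IcoP_self, IcoP_self]
    have hc := coreA q s k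
    linear_combination qbinom (q^2) k k * hc
  · have hb : IcoP q k n = (1 - q^(2*k+1)) * IcoP q (k+1) n := IcoP_bot q h
    have ht : IcoP q (k+1) (n+1) = IcoP q (k+1) n * (1 - q^(2*n+1)) := IcoP_top q (by omega)
    have habs := qbinom_absorb (q^2) n k hk
    have hc := coreA q s k
    have hpow : q^(2*k+1) * (q^2)^(n-k) = q^(2*n+1) := by
      rw [← pow_mul, ← pow_add]
      congr 1
      omega
    rw [hb, ht, gA_succ]
    linear_combination
      (IcoP q (k+1) n * qbinom (q^2) n k * (1 - q^(2*k+1))) * hc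
      + (IcoP q (k+1) n * q^(2*k+1) * Pprod q s (2*k+1)) * habs
      - (IcoP q (k+1) n * Pprod q s (2*k+1) * qbinom (q^2) n k) * hpow

lemma claimA (q s : R) (n : ℕ) : MRP q (q*s) n - s * MRP q s n = GRP q s n := by
  set V : ℕ → R := fun m => qbinom (q^2) n m * IcoP q m n * gA q s m with hV
  have h1 : MRP q (q*s) n - s * MRP q s n - GRP q s n
      = ∑ k ∈ Finset.range (n+1), (V (k+1) - V k) := by
    rw [MRP, MRP, GRP, Finset.mul_sum, ← Finset.sum_sub_distrib, ← Finset.sum_sub_distrib]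
    apply Finset.sum_congr rfl
    intro k hk
    exact perA q s n k (Nat.lt_succ_iff.mp (Finset.mem_range.mp hk))
  have h2 : ∑ k ∈ Finset.range (n+1), (V (k+1) - V k) = V (n+1) - V 0 :=
    Finset.sum_range_sub V (n+1)
  have h3 : V (n+1) = 0 := by
    simp only [hV]
    rw [qbinom_eq_zero_of_lt (q^2) (show n < n+1 by omega)]
    ring
  have h4 : V 0 = 0 := by
    simp only [hV, gA_zero]
    ring
  linear_combination h1 + h2 + h3 - h4

lemma perB (q s : R) (n k : ℕ) (hk : k ≤ n) :
    (Pprod q (q*s) (2*k+1) - s * Pprod q s (2*k+1)) * IcoP q (k+1) (n+1)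
      = Pprod q s (2*k+2) * IcoP q (k+1) (n+1)
        + q^(2*k) * Pprod q s (2*k) * IcoP q k (n+1) := by
  rw [IcoP_bot q (show k < n+1 by omega)]
  linear_combination (IcoP q (k+1) (n+1)) * coreB q s k

lemma claimB (q s : R) (n : ℕ) : GRP q (q*s) n - s * GRP q s n = MRP q s (n+1) := by
  set g : ℕ → R := fun m => (q^2)^m * qbinom (q^2) n m * Pprod q s (2*m) * IcoP q m (n+1) with hg
  have h1 : GRP q (q*s) n - s * GRP q s n
      - ∑ k ∈ Finset.range (n+1),
          (qbinom (q^2) (n+1) (k+1) * Pprod q s (2*(k+1)) * IcoP q (k+1) (n+1))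
      = ∑ k ∈ Finset.range (n+1), (g k - g (k+1)) := by
    rw [GRP, GRP, Finset.mul_sum, ← Finset.sum_sub_distrib, ← Finset.sum_sub_distrib]
    apply Finset.sum_congr rfl
    intro k hk
    have hk' : k ≤ n := Nat.lt_succ_iff.mp (Finset.mem_range.mp hk)
    have hpb := perB q s n k hk'
    simp only [hg, show 2*(k+1) = 2*k+2 by omega, qbinom_succ_succ]
    linear_combination (qbinom (q^2) n k) * hpb
  have h2 : ∑ k ∈ Finset.range (n+1), (g k - g (k+1)) = g 0 - g (n+1) :=
    Finset.sum_range_sub' g (n+1)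
  have h3 : MRP q s (n+1)
      = ∑ k ∈ Finset.range (n+1),
          (qbinom (q^2) (n+1) (k+1) * Pprod q s (2*(k+1)) * IcoP q (k+1) (n+1)) + g 0 := by
    rw [MRP, Finset.sum_range_succ'
      (fun k => qbinom (q^2) (n+1) k * Pprod q s (2*k) * IcoP q k (n+1)) (n+1)]
    simp only [hg]
    norm_num [Pprod]
  have h4 : g (n+1) = 0 := by
    simp only [hg]
    rw [qbinom_eq_zero_of_lt (q^2) (show n < n+1 by omega)]
    ring
  rw [h3]
  linear_combination h1 + h2 - h4

lemma evenId (q : R) : ∀ n : ℕ, ∀ s : R, Lq q s (2*n) = MRP q s n := by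
  intro n
  induction n with
  | zero =>
      intro s
      simp [Lq, MRP, Pprod, IcoP_self]
  | succ n ih =>
      intro s
      have odd : ∀ x : R, Lq q x (2*n+1) = GRP q x n := by
        intro x
        rw [Lq_succ, ih, ih]
        exact claimA q x n
      have e1 : 2*(n+1) = (2*n+1)+1 := by omega
      rw [e1, Lq_succ, odd, odd]
      exact claimB q s n

end Aux

theorem stmt15 {R : Type*} [CommRing R] (s q : R) (n : ℕ) :
    ∑ j ∈ Finset.range (2 * n + 2), (-s) ^ j * qbinom q (2 * n + 1) j =
      ∑ k ∈ Finset.range (n + 1),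
        qbinom (q ^ 2) n k * (∏ j ∈ Finset.range (2 * k + 1), (q ^ j - s)) *
          ∏ i ∈ Finset.Ico (k + 1) (n + 1), (1 - q ^ (2 * i + 1)) := by
  have e : 2 * n + 2 = (2 * n + 1) + 1 := by omega
  have hL : ∑ j ∈ Finset.range (2 * n + 2), (-s) ^ j * qbinom q (2 * n + 1) j
      = Lq q s (2 * n + 1) := by
    rw [Lq, e]
  have hR : ∑ k ∈ Finset.range (n + 1),
        qbinom (q ^ 2) n k * (∏ j ∈ Finset.range (2 * k + 1), (q ^ j - s)) *
          ∏ i ∈ Finset.Ico (k + 1) (n + 1), (1 - q ^ (2 * i + 1))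
      = GRP q s n := by
    rw [GRP]
    rfl
  rw [hL, hR, Lq_succ, evenId q n (q * s), evenId q n s]
  exact claimA q s n
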